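/- arXiv:math/0011059 — 5 statements merged into one kernel-verified Lean document; each statement's English description precedes it below -/
import Mathlib

section
/- Let λ : ℝ → ℝ be continuously differentiable with Λ(t) = ∫_0^t λ(s) ds, and suppose p, q : ℝ → ℝ satisfy p' = λ·(q - p), q' = λ·(p - q), with p(0) = 1, q(0) = 0. Then p(t) = (1 + e^{-2Λ(t)})/2 and q(t) = (1 - e^{-2Λ(t)})/2 for all t ≥ 0. -/
/-- Solution of the ODE system for the conditional velocity probabilities of
the telegrapher's velocity process. -/
theorem velocity_ode_solution (f : ℝ → ℝ) (Λ p q : ℝ → ℝ)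
    (hf : ContDiff ℝ 1 f)
    (hΛ : ∀ t, Λ t = ∫ s in (0:ℝ)..t, f s)
    (hp : Differentiable ℝ p) (hq : Differentiable ℝ q)
    (hp' : ∀ t, deriv p t = f t * (q t - p t))
    (hq' : ∀ t, deriv q t = f t * (p t - q t))
    (hp0 : p 0 = 1) (hq0 : q 0 = 0) :
    ∀ t, 0 ≤ t →
      p t = (1 + Real.exp (-2 * Λ t)) / 2 ∧
      q t = (1 - Real.exp (-2 * Λ t)) / 2 := by
  have hfc : Continuous f := hf.continuous
  have hΛd : ∀ t, HasDerivAt Λ (f t) t := by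
    intro t
    have h : HasDerivAt (fun u => ∫ s in (0:ℝ)..u, f s) (f t) t :=
      intervalIntegral.integral_hasDerivAt_right (hfc.intervalIntegrable 0 t)
        (hfc.stronglyMeasurableAtFilter _ _) hfc.continuousAt
    exact h.congr_of_eventuallyEq (Filter.Eventually.of_forall fun u => hΛ u)
  have hΛ0 : Λ 0 = 0 := by simp [hΛ 0]
  -- sum is constant 1
  have hs : ∀ t, p t + q t = 1 := by
    have hconst : ∀ x y : ℝ, (p + q) x = (p + q) y := by
      apply is_const_of_deriv_eq_zero (hp.add hq)
      intro x
      rw [deriv_add (hp x) (hq x), hp' x, hq' x]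
      ring
    intro t
    have := hconst t 0
    simpa [hp0, hq0] using this
  -- g t = (p t - q t) * exp (2 Λ t) is constant 1
  have hg : ∀ t, (p t - q t) * Real.exp (2 * Λ t) = 1 := by
    set g : ℝ → ℝ := fun t => (p t - q t) * Real.exp (2 * Λ t) with hgdef
    have hgd : ∀ t, HasDerivAt g 0 t := by
      intro t
      have h1 : HasDerivAt (fun t => p t - q t) (f t * (q t - p t) - f t * (p t - q t)) t := by
        have := ((hp t).hasDerivAt.sub (hq t).hasDerivAt)
        rwa [hp' t, hq' t] at this
      have h2 : HasDerivAt (fun t => Real.exp (2 * Λ t)) (Real.exp (2 * Λ t) * (2 * f t)) t :=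
        (((hΛd t).const_mul 2).exp)
      have := h1.mul h2
      exact this.congr_deriv (by ring)
    have hconst : ∀ x y : ℝ, g x = g y :=
      is_const_of_deriv_eq_zero (fun x => (hgd x).differentiableAt)
        (fun x => (hgd x).deriv)
    intro t
    have := hconst t 0
    simpa [hgdef, hp0, hq0, hΛ0] using this
  intro t _
  have hd : p t - q t = Real.exp (-2 * Λ t) := by
    rw [show (-2 : ℝ) * Λ t = -(2 * Λ t) by ring, Real.exp_neg]
    field_simp
    exact hg t
  constructor <;> [linarith [hs t, hd]; linarith [hs t, hd]]
end

section
/- Suppose u : ℝ × ℝ → ℝ is twice differentiable and satisfies the telegraph equation u_tt + 2λ(t)u_t = c²u_xx, where λ(t) = θ·tanh(θt). Then v(x,t) = cosh(θt)·u(x,t) satisfies the Klein–Gordon-type equation v_tt - θ²v = c²v_xx. -/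
/-- If `u` satisfies the telegraph equation `u_tt + 2θ tanh(θt) u_t = c² u_xx`,
then `v(x,t) = cosh(θt) u(x,t)` satisfies `v_tt - θ² v = c² v_xx`. -/
theorem telegraph_to_kleinGordon (c θ : ℝ) (hc : 0 < c) (u : ℝ → ℝ → ℝ)
    (hu : ContDiff ℝ 2 (fun p : ℝ × ℝ => u p.1 p.2))
    (hPDE : ∀ x t : ℝ,
      deriv (deriv (fun τ => u x τ)) t
        + 2 * (θ * Real.tanh (θ * t)) * deriv (fun τ => u x τ) t
        = c ^ 2 * deriv (fun y => deriv (fun z => u z t) y) x) :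
    ∀ x t : ℝ,
      deriv (deriv (fun τ => Real.cosh (θ * τ) * u x τ)) t
        - θ ^ 2 * (Real.cosh (θ * t) * u x t)
        = c ^ 2 * deriv (fun y => deriv (fun z => Real.cosh (θ * t) * u z t) y) x := by
  intro x t
  have hg : ContDiff ℝ 2 (fun τ => u x τ) :=
    hu.comp (f := fun τ : ℝ => (x, τ)) (ContDiff.prodMk (contDiff_const (c := x)) contDiff_id)
  have hg1 : Differentiable ℝ (fun τ => u x τ) := hg.differentiable (by norm_num)
  have hg2 : Differentiable ℝ (deriv (fun τ => u x τ)) := by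
    have h := (contDiff_succ_iff_deriv.mp
      (show ContDiff ℝ ((1 : ℕ∞) + 1) (fun τ => u x τ) from by norm_num; exact_mod_cast hg)).2
    exact h.2.differentiable (by norm_num)
  have hch : ∀ τ : ℝ, HasDerivAt (fun s => Real.cosh (θ * s)) (θ * Real.sinh (θ * τ)) τ := by
    intro τ
    have := (Real.hasDerivAt_cosh (θ * τ)).comp τ ((hasDerivAt_id τ).const_mul θ)
    simpa [mul_comm, Function.comp_def] using this
  have hsh : ∀ τ : ℝ, HasDerivAt (fun s => Real.sinh (θ * s)) (θ * Real.cosh (θ * τ)) τ := by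
    intro τ
    have := (Real.hasDerivAt_sinh (θ * τ)).comp τ ((hasDerivAt_id τ).const_mul θ)
    simpa [mul_comm, Function.comp_def] using this
  have hderiv1 : deriv (fun τ => Real.cosh (θ * τ) * u x τ)
      = fun τ => θ * Real.sinh (θ * τ) * u x τ
          + Real.cosh (θ * τ) * deriv (fun τ => u x τ) τ :=
    funext fun τ => ((hch τ).mul (hg1 τ).hasDerivAt).deriv
  have hd2 : HasDerivAt
      (fun τ => θ * Real.sinh (θ * τ) * u x τ
          + Real.cosh (θ * τ) * deriv (fun τ => u x τ) τ)
      ((θ * (θ * Real.cosh (θ * t)) * u x t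
          + θ * Real.sinh (θ * t) * deriv (fun τ => u x τ) t)
        + (θ * Real.sinh (θ * t) * deriv (fun τ => u x τ) t
          + Real.cosh (θ * t) * deriv (deriv (fun τ => u x τ)) t)) t :=
    (((hsh t).const_mul θ).mul (hg1 t).hasDerivAt).add ((hch t).mul (hg2 t).hasDerivAt)
  have hrhs : (fun y => deriv (fun z => Real.cosh (θ * t) * u z t) y)
      = fun y => Real.cosh (θ * t) * deriv (fun z => u z t) y :=
    funext fun y => deriv_const_mul_field _
  rw [hderiv1, hd2.deriv, hrhs, deriv_const_mul_field]
  have key := hPDE x t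
  have hcpos : (0 : ℝ) < Real.cosh (θ * t) := Real.cosh_pos _
  have ht : Real.sinh (θ * t) = Real.tanh (θ * t) * Real.cosh (θ * t) := by
    rw [Real.tanh_eq_sinh_div_cosh]; field_simp
  rw [ht]
  linear_combination Real.cosh (θ * t) * key
end

section
/- Let F, B : ℝ × ℝ → ℝ be twice differentiable and satisfy F_t = -cF_x - λ(t)(F - B) and B_t = cB_x + λ(t)(F - B), with λ continuously differentiable. Then P = F + B satisfies the telegraph equation P_tt + 2λ(t)P_t = c²P_xx. -/
section helpers

variable {E : Type*} [NormedAddCommGroup E] [NormedSpace ℝ E]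

private lemma hasDerivAt_slice_x {g : ℝ × ℝ → E} (hg : Differentiable ℝ g) (x t : ℝ) :
    HasDerivAt (fun y => g (y, t)) (fderiv ℝ g (x, t) (1, 0)) x := by
  have h := (hg (x, t)).hasFDerivAt.comp_hasDerivAt x
    (HasDerivAt.prodMk (hasDerivAt_id x) (hasDerivAt_const x t))
  simpa [Function.comp_def] using h

private lemma hasDerivAt_slice_t {g : ℝ × ℝ → E} (hg : Differentiable ℝ g) (x t : ℝ) :
    HasDerivAt (fun τ => g (x, τ)) (fderiv ℝ g (x, t) (0, 1)) t := by
  have h := (hg (x, t)).hasFDerivAt.comp_hasDerivAt t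
    (HasDerivAt.prodMk (hasDerivAt_const t x) (hasDerivAt_id t))
  simpa [Function.comp_def] using h

private lemma diff_of_cd2 {g : ℝ × ℝ → ℝ} (hg : ContDiff ℝ 2 g) : Differentiable ℝ g :=
  hg.differentiable (by norm_num)

private lemma diff_fderiv_of_cd2 {g : ℝ × ℝ → ℝ} (hg : ContDiff ℝ 2 g) :
    Differentiable ℝ (fderiv ℝ g) :=
  (hg.fderiv_right (by norm_num : (1:WithTop ℕ∞) + 1 ≤ 2)).differentiable one_ne_zero

private lemma hasDerivAt_fderiv_slice_x {g : ℝ × ℝ → ℝ} (hg : ContDiff ℝ 2 g) (x t : ℝ)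
    (w : ℝ × ℝ) :
    HasDerivAt (fun y => fderiv ℝ g (y, t) w) (fderiv ℝ (fderiv ℝ g) (x, t) (1, 0) w) x := by
  have h2 := hasDerivAt_slice_x (diff_fderiv_of_cd2 hg) x t
  have h := ((ContinuousLinearMap.apply ℝ ℝ w).hasFDerivAt.comp_hasDerivAt x h2)
  exact h

private lemma hasDerivAt_fderiv_slice_t {g : ℝ × ℝ → ℝ} (hg : ContDiff ℝ 2 g) (x t : ℝ)
    (w : ℝ × ℝ) :
    HasDerivAt (fun τ => fderiv ℝ g (x, τ) w) (fderiv ℝ (fderiv ℝ g) (x, t) (0, 1) w) t := by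
  have h2 := hasDerivAt_slice_t (diff_fderiv_of_cd2 hg) x t
  have h := ((ContinuousLinearMap.apply ℝ ℝ w).hasFDerivAt.comp_hasDerivAt t h2)
  exact h

private lemma snd_symm {g : ℝ × ℝ → ℝ} (hg : ContDiff ℝ 2 g) (p : ℝ × ℝ) (v w : ℝ × ℝ) :
    fderiv ℝ (fderiv ℝ g) p v w = fderiv ℝ (fderiv ℝ g) p w v :=
  second_derivative_symmetric (fun y => (diff_of_cd2 hg y).hasFDerivAt)
    (diff_fderiv_of_cd2 hg p).hasFDerivAt v w

end helpers

/-- If `F, B` satisfy the first-order hyperbolic system of the telegraph process,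
then `P = F + B` satisfies the telegraph equation `P_tt + 2λ(t) P_t = c² P_xx`. -/
theorem sum_satisfies_telegraph (c : ℝ) (hc : 0 < c) (lam : ℝ → ℝ)
    (hlam : ContDiff ℝ 1 lam) (F B : ℝ → ℝ → ℝ)
    (hF : ContDiff ℝ 2 (fun p : ℝ × ℝ => F p.1 p.2))
    (hB : ContDiff ℝ 2 (fun p : ℝ × ℝ => B p.1 p.2))
    (hFt : ∀ x t : ℝ, deriv (fun τ => F x τ) t
      = -c * deriv (fun y => F y t) x - lam t * (F x t - B x t))
    (hBt : ∀ x t : ℝ, deriv (fun τ => B x τ) t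
      = c * deriv (fun y => B y t) x + lam t * (F x t - B x t)) :
    ∀ x t : ℝ,
      deriv (deriv (fun τ => F x τ + B x τ)) t
        + 2 * lam t * deriv (fun τ => F x τ + B x τ) t
        = c ^ 2 * deriv (fun y => deriv (fun z => F z t + B z t) y) x := by
  set f : ℝ × ℝ → ℝ := fun p => F p.1 p.2 with hf_def
  set b : ℝ × ℝ → ℝ := fun p => B p.1 p.2 with hb_def
  have hfd : Differentiable ℝ f := diff_of_cd2 hF
  have hbd : Differentiable ℝ b := diff_of_cd2 hB
  -- partial derivative notation
  set Fx : ℝ → ℝ → ℝ := fun x t => fderiv ℝ f (x, t) (1, 0) with hFx_def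
  set Bx : ℝ → ℝ → ℝ := fun x t => fderiv ℝ b (x, t) (1, 0) with hBx_def
  set Ft : ℝ → ℝ → ℝ := fun x t => fderiv ℝ f (x, t) (0, 1) with hFt_def
  set Bt : ℝ → ℝ → ℝ := fun x t => fderiv ℝ b (x, t) (0, 1) with hBt_def
  -- slice derivatives
  have hFslx : ∀ x t : ℝ, HasDerivAt (fun y => F y t) (Fx x t) x := fun x t =>
    hasDerivAt_slice_x hfd x t
  have hBslx : ∀ x t : ℝ, HasDerivAt (fun y => B y t) (Bx x t) x := fun x t =>
    hasDerivAt_slice_x hbd x t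
  have hFslt : ∀ x t : ℝ, HasDerivAt (fun τ => F x τ) (Ft x t) t := fun x t =>
    hasDerivAt_slice_t hfd x t
  have hBslt : ∀ x t : ℝ, HasDerivAt (fun τ => B x τ) (Bt x t) t := fun x t =>
    hasDerivAt_slice_t hbd x t
  -- PDE in partial-derivative form
  have hFt' : ∀ x t : ℝ, Ft x t = -c * Fx x t - lam t * (F x t - B x t) := by
    intro x t
    rw [← (hFslt x t).deriv, ← (hFslx x t).deriv]
    exact hFt x t
  have hBt' : ∀ x t : ℝ, Bt x t = c * Bx x t + lam t * (F x t - B x t) := by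
    intro x t
    rw [← (hBslt x t).deriv, ← (hBslx x t).deriv]
    exact hBt x t
  intro x t
  -- second partials
  set Fxx : ℝ := fderiv ℝ (fderiv ℝ f) (x, t) (1, 0) (1, 0) with hFxx_def
  set Bxx : ℝ := fderiv ℝ (fderiv ℝ b) (x, t) (1, 0) (1, 0) with hBxx_def
  -- first time-derivative of the sum
  have hPt : deriv (fun τ => F x τ + B x τ) = fun τ => Ft x τ + Bt x τ := by
    funext τ
    exact ((hFslt x τ).add (hBslt x τ)).deriv
  -- inner x-derivative of the sum
  have hPx : (fun y => deriv (fun z => F z t + B z t) y) = fun y => Fx y t + Bx y t := by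
    funext y
    exact ((hFslx y t).add (hBslx y t)).deriv
  -- second x-derivative
  have hPxx : deriv (fun y => Fx y t + Bx y t) x = Fxx + Bxx :=
    ((hasDerivAt_fderiv_slice_x hF x t (1, 0)).add
      (hasDerivAt_fderiv_slice_x hB x t (1, 0))).deriv
  -- second time-derivative computation
  have hPtt : deriv (fun τ => Ft x τ + Bt x τ) t
      = -c * fderiv ℝ (fderiv ℝ f) (x, t) (0, 1) (1, 0)
        + c * fderiv ℝ (fderiv ℝ b) (x, t) (0, 1) (1, 0) := by
    have heq : (fun τ => Ft x τ + Bt x τ) = fun τ => -c * Fx x τ + c * Bx x τ := by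
      funext τ
      rw [hFt' x τ, hBt' x τ]; ring
    rw [heq]
    exact (((hasDerivAt_fderiv_slice_t hF x t (1, 0)).const_mul (-c)).add
      ((hasDerivAt_fderiv_slice_t hB x t (1, 0)).const_mul c)).deriv
  -- Clairaut: swap mixed partials
  have hsymF : fderiv ℝ (fderiv ℝ f) (x, t) (0, 1) (1, 0)
      = fderiv ℝ (fderiv ℝ f) (x, t) (1, 0) (0, 1) := snd_symm hF (x, t) _ _
  have hsymB : fderiv ℝ (fderiv ℝ b) (x, t) (0, 1) (1, 0)
      = fderiv ℝ (fderiv ℝ b) (x, t) (1, 0) (0, 1) := snd_symm hB (x, t) _ _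
  -- mixed partial via the PDE
  have hFtx : fderiv ℝ (fderiv ℝ f) (x, t) (1, 0) (0, 1)
      = -c * Fxx - lam t * (Fx x t - Bx x t) := by
    have h1 : HasDerivAt (fun y => Ft y t)
        (fderiv ℝ (fderiv ℝ f) (x, t) (1, 0) (0, 1)) x :=
      hasDerivAt_fderiv_slice_x hF x t (0, 1)
    have h2 : HasDerivAt (fun y => -c * Fx y t - lam t * (F y t - B y t))
        (-c * Fxx - lam t * (Fx x t - Bx x t)) x :=
      ((hasDerivAt_fderiv_slice_x hF x t (1, 0)).const_mul (-c)).sub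
        (((hFslx x t).sub (hBslx x t)).const_mul (lam t))
    have heq : (fun y => Ft y t) = fun y => -c * Fx y t - lam t * (F y t - B y t) := by
      funext y; exact hFt' y t
    rw [← h1.deriv, heq, h2.deriv]
  have hBtx : fderiv ℝ (fderiv ℝ b) (x, t) (1, 0) (0, 1)
      = c * Bxx + lam t * (Fx x t - Bx x t) := by
    have h1 : HasDerivAt (fun y => Bt y t)
        (fderiv ℝ (fderiv ℝ b) (x, t) (1, 0) (0, 1)) x :=
      hasDerivAt_fderiv_slice_x hB x t (0, 1)
    have h2 : HasDerivAt (fun y => c * Bx y t + lam t * (F y t - B y t))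
        (c * Bxx + lam t * (Fx x t - Bx x t)) x :=
      ((hasDerivAt_fderiv_slice_x hB x t (1, 0)).const_mul c).add
        (((hFslx x t).sub (hBslx x t)).const_mul (lam t))
    have heq : (fun y => Bt y t) = fun y => c * Bx y t + lam t * (F y t - B y t) := by
      funext y; exact hBt' y t
    rw [← h1.deriv, heq, h2.deriv]
  -- assemble
  rw [hPt, hPx, hPxx, hPtt, hsymF, hsymB, hFtx, hBtx]
  beta_reduce
  rw [hFt' x t, hBt' x t]
  ring
end

section
/- For constants θ, c with c > 0 and t > 0, ∫_{-ct}^{ct} I₀((θ/c)·√(c²t² - x²)) dx = (c/θ)·(e^{θt} - e^{-θt}). -/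
open MeasureTheory intervalIntegral

lemma integral_sq_sub_sq_pow (a : ℝ) (k : ℕ) :
    ∫ x in (-a)..a, (a ^ 2 - x ^ 2) ^ k
      = a ^ (2 * k + 1) * 2 ^ (2 * k + 1) * ((k : ℕ).factorial : ℝ) ^ 2
        / ((2 * k + 1).factorial : ℝ) := by
  induction k with
  | zero => simp; ring
  | succ k ih =>
    -- derivative of F x = x * (a^2 - x^2)^(k+1)
    have key : ∫ x in (-a)..a,
        ((2 * (k:ℝ) + 3) * (a ^ 2 - x ^ 2) ^ (k + 1)
          - 2 * ((k:ℝ) + 1) * a ^ 2 * (a ^ 2 - x ^ 2) ^ k) = 0 := by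
      have hF : ∀ x ∈ Set.uIcc (-a) a,
          HasDerivAt (fun x : ℝ => x * (a ^ 2 - x ^ 2) ^ (k + 1))
            ((2 * (k:ℝ) + 3) * (a ^ 2 - x ^ 2) ^ (k + 1)
              - 2 * ((k:ℝ) + 1) * a ^ 2 * (a ^ 2 - x ^ 2) ^ k) x := by
        intro x _
        have h1 : HasDerivAt (fun x : ℝ => a ^ 2 - x ^ 2) (-(2 * x ^ 1)) x :=
          ((hasDerivAt_pow 2 x).const_sub (a ^ 2)).congr_deriv (by push_cast; ring)
        have h2 := h1.pow (k + 1)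
        have h3 := (hasDerivAt_id x).mul h2
        simp only [id_eq] at h3
        convert h3 using 1
        · rfl
        · rfl
        · rfl
        simp only [Pi.pow_apply]
        have hx : (a ^ 2 - x ^ 2) ^ (k + 1) = (a ^ 2 - x ^ 2) * (a ^ 2 - x ^ 2) ^ k := by
          ring
        push_cast
        rw [hx]; ring
      have hint : IntervalIntegrable (fun x : ℝ =>
          (2 * (k:ℝ) + 3) * (a ^ 2 - x ^ 2) ^ (k + 1)
            - 2 * ((k:ℝ) + 1) * a ^ 2 * (a ^ 2 - x ^ 2) ^ k) volume (-a) a := by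
        apply Continuous.intervalIntegrable; fun_prop
      rw [intervalIntegral.integral_eq_sub_of_hasDerivAt hF hint]
      simp
    have i1 : IntervalIntegrable (fun x : ℝ => (a ^ 2 - x ^ 2) ^ (k + 1)) volume (-a) a := by
      apply Continuous.intervalIntegrable; fun_prop
    have i2 : IntervalIntegrable (fun x : ℝ => (a ^ 2 - x ^ 2) ^ k) volume (-a) a := by
      apply Continuous.intervalIntegrable; fun_prop
    rw [intervalIntegral.integral_sub ((i1.const_mul _)) (i2.const_mul _),
      intervalIntegral.integral_const_mul, intervalIntegral.integral_const_mul, ih] at key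
    have h23 : (2 * (k:ℝ) + 3) ≠ 0 := by positivity
    have hfac1 : ((2 * k + 1).factorial : ℝ) ≠ 0 := Nat.cast_ne_zero.mpr (Nat.factorial_ne_zero _)
    have hfac2 : ((2 * (k+1) + 1).factorial : ℝ)
        = (2 * (k:ℝ) + 3) * (2 * (k:ℝ) + 2) * ((2 * k + 1).factorial : ℝ) := by
      have : 2 * (k + 1) + 1 = (2 * k + 1) + 1 + 1 := by ring
      rw [this, Nat.factorial_succ, Nat.factorial_succ]
      push_cast; ring
    have hfk : (((k:ℕ)+1).factorial : ℝ) = ((k:ℝ) + 1) * ((k:ℕ).factorial : ℝ) := by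
      rw [Nat.factorial_succ]; push_cast; ring
    have hJ : (∫ x in (-a)..a, (a ^ 2 - x ^ 2) ^ (k+1))
        = 2 * ((k:ℝ)+1) * a ^ 2
          * (a ^ (2 * k + 1) * 2 ^ (2 * k + 1) * ((k:ℕ).factorial : ℝ) ^ 2
              / ((2 * k + 1).factorial : ℝ)) / (2 * (k:ℝ) + 3) := by
      field_simp at key ⊢
      linarith
    rw [hJ, hfac2, hfk]
    field_simp
    ring

lemma tsum_sinh (x : ℝ) :
    ∑' k : ℕ, x ^ (2 * k + 1) / ((2 * k + 1).factorial : ℝ)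
      = (Real.exp x - Real.exp (-x)) / 2 := by
  have h1 : HasSum (fun n : ℕ => x ^ n / (n.factorial : ℝ)) (Real.exp x) := by
    rw [Real.exp_eq_exp_ℝ]; exact NormedSpace.expSeries_div_hasSum_exp x
  have h2 : HasSum (fun n : ℕ => (-x) ^ n / (n.factorial : ℝ)) (Real.exp (-x)) := by
    rw [Real.exp_eq_exp_ℝ]; exact NormedSpace.expSeries_div_hasSum_exp (-x)
  have h3 : HasSum (fun n : ℕ => (x ^ n / (n.factorial : ℝ) - (-x) ^ n / (n.factorial : ℝ)) / 2)
      ((Real.exp x - Real.exp (-x)) / 2) := (h1.sub h2).div_const 2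
  set f : ℕ → ℝ := fun n => (x ^ n / (n.factorial : ℝ) - (-x) ^ n / (n.factorial : ℝ)) / 2 with hf
  have heven : HasSum (fun k : ℕ => f (2 * k)) 0 := by
    have : (fun k : ℕ => f (2 * k)) = fun _ => (0 : ℝ) := by
      funext k
      simp only [hf, Even.neg_pow (even_two_mul k), sub_self, zero_div]
    rw [this]; exact hasSum_zero
  have hodd : Summable (fun k : ℕ => f (2 * k + 1)) :=
    h3.summable.comp_injective (fun m n h => by omega)
  have h4 : HasSum f (0 + ∑' k, f (2 * k + 1)) := heven.even_add_odd hodd.hasSum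
  have h5 := h3.unique h4
  rw [zero_add] at h5
  rw [h5]
  apply tsum_congr
  intro k
  have : (-x) ^ (2 * k + 1) = -x ^ (2 * k + 1) := Odd.neg_pow (by exact ⟨k, by ring⟩) x
  simp only [hf, this]
  ring

/-- `∫_{-ct}^{ct} I₀((θ/c)√(c²t² - x²)) dx = (c/θ)(e^{θt} - e^{-θt})`, where `I₀`
is the modified Bessel function of the first kind of order 0, given by its series. -/
theorem integral_besselI0 (θ c t : ℝ) (hθ : θ ≠ 0) (hc : 0 < c) (ht : 0 < t)
    (I0 : ℝ → ℝ)
    (hI0 : ∀ z : ℝ, I0 z = ∑' k : ℕ, (z / 2) ^ (2 * k) / ((Nat.factorial k : ℝ)) ^ 2) :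
    ∫ x in (-(c * t))..(c * t), I0 (θ / c * Real.sqrt (c ^ 2 * t ^ 2 - x ^ 2))
      = c / θ * (Real.exp (θ * t) - Real.exp (-(θ * t))) := by
  have hct : 0 < c * t := mul_pos hc ht
  have hle : -(c * t) ≤ c * t := by linarith
  set D : ℝ := θ ^ 2 / (4 * c ^ 2) with hDdef
  set f : ℕ → ℝ → ℝ :=
    fun k x => (D * (c ^ 2 * t ^ 2 - x ^ 2)) ^ k / ((k.factorial : ℝ)) ^ 2 with hfdef
  -- pointwise equality on the interval
  have hfeq : Set.EqOn (fun x => I0 (θ / c * Real.sqrt (c ^ 2 * t ^ 2 - x ^ 2)))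
      (fun x => ∑' k, f k x) (Set.Ioc (-(c * t)) (c * t)) := by
    intro x hx
    have hx2 : 0 ≤ c ^ 2 * t ^ 2 - x ^ 2 := by
      have h1 : x ^ 2 ≤ (c * t) ^ 2 := sq_le_sq' (le_of_lt hx.1) hx.2
      nlinarith
    simp only [hI0]
    apply tsum_congr
    intro k
    have hsq : (θ / c * Real.sqrt (c ^ 2 * t ^ 2 - x ^ 2) / 2) ^ 2
        = D * (c ^ 2 * t ^ 2 - x ^ 2) := by
      rw [hDdef]
      calc (θ / c * Real.sqrt (c ^ 2 * t ^ 2 - x ^ 2) / 2) ^ 2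
          = θ ^ 2 / (4 * c ^ 2) * Real.sqrt (c ^ 2 * t ^ 2 - x ^ 2) ^ 2 := by ring
        _ = θ ^ 2 / (4 * c ^ 2) * (c ^ 2 * t ^ 2 - x ^ 2) := by rw [Real.sq_sqrt hx2]
    rw [pow_mul, hsq, hfdef]
  -- integrability of each term
  have hint : ∀ k : ℕ, Integrable (f k) (volume.restrict (Set.Ioc (-(c * t)) (c * t))) := by
    intro k
    apply Continuous.integrableOn_Ioc
    fun_prop
  -- value of each integral
  have hval : ∀ k : ℕ, ∫ x in Set.Ioc (-(c * t)) (c * t), f k x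
      = 2 * c * θ ^ (2 * k) * t ^ (2 * k + 1) / ((2 * k + 1).factorial : ℝ) := by
    intro k
    rw [← intervalIntegral.integral_of_le hle]
    have heq : ∀ x : ℝ, f k x
        = D ^ k / ((k.factorial : ℝ)) ^ 2 * ((c * t) ^ 2 - x ^ 2) ^ k := by
      intro x
      simp only [hfdef]
      have : (c * t) ^ 2 = c ^ 2 * t ^ 2 := by ring
      rw [this, mul_pow]
      ring
    simp_rw [heq]
    rw [intervalIntegral.integral_const_mul, integral_sq_sub_sq_pow (c * t) k]
    have hfk : ((k.factorial : ℝ)) ≠ 0 := Nat.cast_ne_zero.mpr (Nat.factorial_ne_zero _)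
    have hffk : (((2 * k + 1).factorial : ℝ)) ≠ 0 := Nat.cast_ne_zero.mpr (Nat.factorial_ne_zero _)
    rw [hDdef]
    field_simp
    rw [div_pow, show ((4:ℝ) * c ^ 2) ^ k = 2 ^ (2 * k) * (c ^ 2) ^ k by
      rw [mul_pow, show (4 : ℝ) = 2 ^ 2 by norm_num, ← pow_mul]]
    field_simp
    ring
  -- norms equal values (nonneg integrand)
  have hnorm : ∀ k : ℕ, ∫ x in Set.Ioc (-(c * t)) (c * t), ‖f k x‖
      = 2 * c * θ ^ (2 * k) * t ^ (2 * k + 1) / ((2 * k + 1).factorial : ℝ) := by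
    intro k
    rw [← hval k]
    apply setIntegral_congr_fun measurableSet_Ioc
    intro x hx
    have hx2 : 0 ≤ c ^ 2 * t ^ 2 - x ^ 2 := by
      have h1 : x ^ 2 ≤ (c * t) ^ 2 := sq_le_sq' (le_of_lt hx.1) hx.2
      nlinarith
    have hD : 0 ≤ D := by rw [hDdef]; positivity
    have : 0 ≤ f k x := by rw [hfdef]; positivity
    exact Real.norm_of_nonneg this
  -- summability
  have habs : ∀ k : ℕ, |θ| ^ (2 * k) = θ ^ (2 * k) := by
    intro k
    rw [← abs_pow, abs_of_nonneg (by rw [pow_mul]; positivity)]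
  have hθabs : (0:ℝ) < |θ| := abs_pos.mpr hθ
  have hsum0 : Summable (fun n : ℕ => (|θ| * t) ^ n / (n.factorial : ℝ)) :=
    Real.summable_pow_div_factorial _
  have hsum1 : Summable (fun k : ℕ => (|θ| * t) ^ (2 * k + 1) / ((2 * k + 1).factorial : ℝ)) :=
    hsum0.comp_injective (fun m n h => by omega)
  have hsum2 : Summable
      (fun k : ℕ => 2 * c * θ ^ (2 * k) * t ^ (2 * k + 1) / ((2 * k + 1).factorial : ℝ)) := by
    have heq : (fun k : ℕ => 2 * c * θ ^ (2 * k) * t ^ (2 * k + 1) / ((2 * k + 1).factorial : ℝ))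
        = fun k : ℕ => (2 * c / |θ|) * ((|θ| * t) ^ (2 * k + 1) / ((2 * k + 1).factorial : ℝ)) := by
      funext k
      rw [mul_pow, show |θ| ^ (2 * k + 1) = θ ^ (2 * k) * |θ| by rw [pow_succ, habs k]]
      field_simp
    rw [heq]
    exact hsum1.mul_left _
  have hsumnorm : Summable (fun k : ℕ => ∫ x in Set.Ioc (-(c * t)) (c * t), ‖f k x‖) := by
    simp_rw [hnorm]; exact hsum2
  -- main computation
  rw [intervalIntegral.integral_of_le hle,
    setIntegral_congr_fun measurableSet_Ioc hfeq,
    ← integral_tsum_of_summable_integral_norm hint hsumnorm]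
  rw [tsum_congr hval]
  have hfin : ∀ k : ℕ, 2 * c * θ ^ (2 * k) * t ^ (2 * k + 1) / ((2 * k + 1).factorial : ℝ)
      = (2 * c / θ) * ((θ * t) ^ (2 * k + 1) / ((2 * k + 1).factorial : ℝ)) := by
    intro k
    rw [mul_pow, show θ ^ (2 * k + 1) = θ ^ (2 * k) * θ from pow_succ θ (2 * k)]
    field_simp
  rw [tsum_congr hfin, tsum_mul_left, tsum_sinh (θ * t)]
  field_simp
end

section
/- For θ ∈ ℝ, c > 0, t > 0, the function p_θ(x,t) = (θt/(2cosh(θt)))·I₁((θ/c)√(c²t² - x²))/√(c²t² - x²) on |x| < ct satisfies ∫_{-ct}^{ct} p_θ(x,t) dx = 1 - 1/cosh(θt). -/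
open MeasureTheory intervalIntegral Real Set

section aux

lemma my_ibp (a : ℝ) (k : ℕ) :
    (2*(k:ℝ)+3) * (∫ x in (-a)..a, (a^2 - x^2)^(k+1)) =
      2*((k:ℝ)+1)*a^2 * ∫ x in (-a)..a, (a^2 - x^2)^k := by
  have hderiv : ∀ x ∈ Set.uIcc (-a) a, HasDerivAt (fun x => x * (a^2 - x^2)^(k+1))
      ((2*(k:ℝ)+3) * (a^2 - x^2)^(k+1) - 2*((k:ℝ)+1)*a^2 * (a^2 - x^2)^k) x := by
    intro x _
    have h1 : HasDerivAt (fun x : ℝ => a^2 - x^2) (-(2*x)) x := by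
      simpa using ((hasDerivAt_pow 2 x).const_sub (a^2))
    have h3 := (hasDerivAt_id x).fun_mul (h1.fun_pow (k+1))
    refine h3.congr_deriv ?_
    have hp : (a^2 - x^2)^(k+1) = (a^2 - x^2)^k * (a^2 - x^2) := pow_succ _ _
    rw [hp]
    simp only [id_eq, Nat.add_sub_cancel] at h3 ⊢
    push_cast
    ring
  have hint : IntervalIntegrable
      (fun x => (2*(k:ℝ)+3) * (a^2 - x^2)^(k+1) - 2*((k:ℝ)+1)*a^2 * (a^2 - x^2)^k)
      volume (-a) a :=
    (Continuous.intervalIntegrable (by continuity) _ _)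
  have key := intervalIntegral.integral_eq_sub_of_hasDerivAt hderiv hint
  have h0 : (a^2 - a^2 : ℝ) = 0 := by ring
  have h0' : (a^2 - (-a)^2 : ℝ) = 0 := by ring
  rw [h0, h0'] at key
  simp only [zero_pow (Nat.succ_ne_zero k), mul_zero, sub_zero, neg_mul] at key
  rw [intervalIntegral.integral_sub ((Continuous.intervalIntegrable (by continuity) _ _))
      ((Continuous.intervalIntegrable (by continuity) _ _)),
    intervalIntegral.integral_const_mul, intervalIntegral.integral_const_mul] at key
  linarith [key]

lemma my_Jval (a : ℝ) : ∀ k : ℕ, (∫ x in (-a)..a, (a^2 - x^2)^k) =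
    a^(2*k+1) * 2^(2*k+1) * ((k.factorial : ℝ))^2 / ((2*k+1).factorial : ℝ) := by
  intro k
  induction k with
  | zero => simp; ring
  | succ n ih =>
    have h := my_ibp a n
    rw [ih] at h
    have h3 : (2*(n:ℝ)+3) ≠ 0 := by positivity
    have hfac1 : ((2*(n+1)+1).factorial : ℝ)
        = (2*(n:ℝ)+3) * (2*(n:ℝ)+2) * ((2*n+1).factorial : ℝ) := by
      have : 2*(n+1)+1 = (2*n+1) + 1 + 1 := by omega
      rw [this, Nat.factorial_succ, Nat.factorial_succ]
      push_cast
      ring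
    have hfac2 : (((n+1).factorial : ℝ)) = ((n:ℝ)+1) * (n.factorial : ℝ) := by
      rw [Nat.factorial_succ]; push_cast; ring
    have hne1 : ((2*n+1).factorial : ℝ) ≠ 0 := by positivity
    have heq : (∫ x in (-a)..a, (a^2 - x^2)^(n+1))
        = 2*((n:ℝ)+1)*a^2 * (a^(2*n+1) * 2^(2*n+1) * ((n.factorial : ℝ))^2
            / ((2*n+1).factorial : ℝ)) / (2*(n:ℝ)+3) := by
      field_simp at h ⊢
      linarith [h]
    rw [heq, hfac1, hfac2]
    have hpa : a^(2*(n+1)+1) = a^(2*n+1) * a^2 := by ring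
    have hp2 : (2:ℝ)^(2*(n+1)+1) = 2^(2*n+1) * 4 := by ring
    rw [hpa, hp2]
    field_simp
    ring

lemma my_term (θ c t : ℝ) (hc : 0 < c) (k : ℕ) :
    (θ*t/(2*Real.cosh (θ*t)) * (θ/c/2)^(2*k+1) / ((k.factorial:ℝ) * ((k+1).factorial:ℝ))) *
      ((c*t)^(2*k+1) * 2^(2*k+1) * ((k.factorial:ℝ))^2 / ((2*k+1).factorial:ℝ))
    = (θ*t)^(2*k+2) / ((2*k+2).factorial : ℝ) / Real.cosh (θ*t) := by
  have hcosh : Real.cosh (θ*t) ≠ 0 := ne_of_gt (Real.cosh_pos _)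
  have hfk : ((k.factorial : ℝ)) ≠ 0 := by positivity
  have hf2k1 : (((2*k+1).factorial : ℝ)) ≠ 0 := by positivity
  have hfac1 : ((2*k+2).factorial : ℝ) = (2*(k:ℝ)+2) * ((2*k+1).factorial : ℝ) := by
    have : 2*k+2 = (2*k+1) + 1 := by omega
    rw [this, Nat.factorial_succ]; push_cast; ring
  have hfac2 : (((k+1).factorial : ℝ)) = ((k:ℝ)+1) * (k.factorial : ℝ) := by
    rw [Nat.factorial_succ]; push_cast; ring
  have hcol : (θ/c/2)^(2*k+1) * ((c*t)^(2*k+1) * 2^(2*k+1)) = (θ*t)^(2*k+1) := by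
    rw [← mul_pow, ← mul_pow]
    congr 1
    field_simp
  have hsplit : (θ*t)^(2*k+2) = (θ*t)^(2*k+1) * (θ*t) := by ring
  have step : ∀ A B : ℝ,
      A * (θ/c/2)^(2*k+1) / B * ((c*t)^(2*k+1) * 2^(2*k+1) * ((k.factorial:ℝ))^2
        / ((2*k+1).factorial:ℝ))
      = A * (θ*t)^(2*k+1) * ((k.factorial:ℝ))^2 / (B * ((2*k+1).factorial:ℝ)) := by
    intro A B
    rw [← hcol]; ring
  rw [hfac1, hfac2, hsplit, step]
  have hk1 : ((k:ℝ)+1) ≠ 0 := by positivity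
  have h2k2 : (2*(k:ℝ)+2) ≠ 0 := by positivity
  field_simp

lemma my_summable (u : ℝ) : Summable (fun k : ℕ => u^(2*k+2)/((2*k+2).factorial : ℝ)) := by
  have hs := (Real.hasSum_cosh u).summable
  have h2 := (summable_nat_add_iff 1).mpr hs
  have hidx : ∀ k : ℕ, (2*(k+1)) = 2*k+2 := fun k => by ring
  simpa only [hidx] using h2

lemma my_sum (u : ℝ) :
    ∑' k : ℕ, u^(2*k+2)/((2*k+2).factorial : ℝ)/Real.cosh u = 1 - 1/Real.cosh u := by
  have hcosh : Real.cosh u ≠ 0 := ne_of_gt (Real.cosh_pos _)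
  have hs := (Real.hasSum_cosh u).summable
  rw [tsum_div_const]
  have h0 : Real.cosh u = 1 + ∑' k : ℕ, u^(2*(k+1))/((2*(k+1)).factorial : ℝ) := by
    rw [Real.cosh_eq_tsum, Summable.tsum_eq_zero_add hs]
    norm_num
  have hidx : ∀ k : ℕ, (2*(k+1)) = 2*k+2 := fun k => by ring
  simp only [hidx] at h0
  have : ∑' k : ℕ, u^(2*k+2)/((2*k+2).factorial : ℝ) = Real.cosh u - 1 := by
    rw [h0]; ring
  rw [this]
  field_simp

end aux

/-- The density `p_θ(x,t) = (θt/(2cosh(θt))) I₁((θ/c)√(c²t²-x²))/√(c²t²-x²)`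
integrates over `(-ct, ct)` to `1 - 1/cosh(θt)`. -/
theorem density_total_mass (θ c t : ℝ) (hc : 0 < c) (ht : 0 < t)
    (I1 : ℝ → ℝ)
    (hI1 : ∀ z : ℝ, I1 z = ∑' k : ℕ,
      (z / 2) ^ (2 * k + 1) / ((Nat.factorial k : ℝ) * (Nat.factorial (k + 1) : ℝ))) :
    ∫ x in (-(c * t))..(c * t),
        θ * t / (2 * Real.cosh (θ * t))
          * (I1 (θ / c * Real.sqrt (c ^ 2 * t ^ 2 - x ^ 2))
              / Real.sqrt (c ^ 2 * t ^ 2 - x ^ 2))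
      = 1 - 1 / Real.cosh (θ * t) := by
  have ha : (0:ℝ) < c * t := mul_pos hc ht
  have hle : -(c*t) ≤ c*t := by linarith
  set b : ℕ → ℝ := fun k =>
    θ*t/(2*Real.cosh (θ*t)) * (θ/c/2)^(2*k+1) / ((k.factorial:ℝ) * ((k+1).factorial:ℝ))
    with hb
  set f : ℕ → ℝ → ℝ := fun k x => b k * ((c*t)^2 - x^2)^k with hf
  -- pointwise identity on the open interval
  have hpt : ∀ x ∈ Set.Ioo (-(c*t)) (c*t),
      θ * t / (2 * Real.cosh (θ * t))
          * (I1 (θ / c * Real.sqrt (c ^ 2 * t ^ 2 - x ^ 2))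
              / Real.sqrt (c ^ 2 * t ^ 2 - x ^ 2))
        = ∑' k : ℕ, f k x := by
    intro x hx
    have hS : 0 < (c*t)^2 - x^2 := by nlinarith [hx.1, hx.2]
    have hXS : c^2*t^2 - x^2 = (c*t)^2 - x^2 := by ring
    have hsq : 0 < Real.sqrt ((c*t)^2 - x^2) := Real.sqrt_pos.mpr hS
    have hsqne : Real.sqrt ((c*t)^2 - x^2) ≠ 0 := ne_of_gt hsq
    rw [hXS, hI1, ← tsum_div_const, ← tsum_mul_left]
    refine tsum_congr fun k => ?_
    have hpow : ((θ/c * Real.sqrt ((c*t)^2 - x^2))/2)^(2*k+1)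
        = (θ/c/2)^(2*k+1) * (((c*t)^2 - x^2)^k * Real.sqrt ((c*t)^2 - x^2)) := by
      rw [show (θ/c * Real.sqrt ((c*t)^2 - x^2))/2
          = (θ/c/2) * Real.sqrt ((c*t)^2 - x^2) by ring, mul_pow]
      congr 1
      rw [pow_succ, pow_mul, Real.sq_sqrt hS.le]
    rw [hpow]
    simp only [hf, hb]
    generalize Real.sqrt ((c*t)^2 - x^2) = s at hsqne ⊢
    field_simp
  -- turn interval integral into set integral over Ioo
  rw [intervalIntegral.integral_of_le hle,
    ← MeasureTheory.setIntegral_congr_set Ioo_ae_eq_Ioc,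
    MeasureTheory.setIntegral_congr_fun measurableSet_Ioo hpt]
  -- auxiliary: Ioo set integrals of powers
  have hIoo : ∀ k : ℕ, (∫ x in Set.Ioo (-(c*t)) (c*t), ((c*t)^2 - x^2)^k)
      = (c*t)^(2*k+1) * 2^(2*k+1) * ((k.factorial : ℝ))^2 / ((2*k+1).factorial : ℝ) := by
    intro k
    rw [MeasureTheory.setIntegral_congr_set Ioo_ae_eq_Ioc,
      ← intervalIntegral.integral_of_le hle, my_Jval (c*t) k]
  -- integrability
  have hcont : ∀ k : ℕ, Continuous (f k) := fun k => by
    simp only [hf]; continuity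
  have hint : ∀ k : ℕ, IntegrableOn (f k) (Set.Ioo (-(c*t)) (c*t)) volume := fun k =>
    ((hcont k).integrableOn_Icc).mono_set Set.Ioo_subset_Icc_self
  -- |b k| in terms of |θ|
  have habs : ∀ k : ℕ, |b k| =
      |θ| * t/(2*Real.cosh (θ * t)) * (|θ| / c / 2)^(2*k+1)
        / ((k.factorial:ℝ) * ((k+1).factorial:ℝ)) := by
    intro k
    rw [hb]
    simp only [abs_div, abs_mul, abs_pow, abs_of_pos ht, abs_of_pos hc,
      abs_of_pos (Real.cosh_pos (θ*t)), abs_two, Nat.abs_cast]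
  -- norm integrals
  have hnorm : ∀ k : ℕ, (∫ x in Set.Ioo (-(c*t)) (c*t), ‖f k x‖)
      = (|θ| * t)^(2*k+2) / ((2*k+2).factorial : ℝ) / Real.cosh (θ*t) := by
    intro k
    have heq : ∀ x ∈ Set.Ioo (-(c*t)) (c*t), ‖f k x‖ = |b k| * ((c*t)^2 - x^2)^k := by
      intro x hx
      have hS : 0 ≤ (c*t)^2 - x^2 := by nlinarith [hx.1, hx.2]
      rw [hf]
      simp only [Real.norm_eq_abs, abs_mul, abs_pow, abs_of_nonneg hS]
    rw [MeasureTheory.setIntegral_congr_fun measurableSet_Ioo heq,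
      MeasureTheory.integral_const_mul, hIoo k, habs k]
    have hco : Real.cosh (|θ| * t) = Real.cosh (θ*t) := by
      rw [show |θ| * t = |θ*t| by rw [abs_mul, abs_of_pos ht], Real.cosh_abs]
    have := my_term |θ| c t hc k
    rw [hco] at this
    exact this
  -- summability of norm integrals
  have hsum : Summable fun k : ℕ => ∫ x in Set.Ioo (-(c*t)) (c*t), ‖f k x‖ := by
    refine Summable.congr ?_ (fun k => (hnorm k).symm)
    exact (my_summable (|θ| * t)).div_const _
  rw [← MeasureTheory.integral_tsum_of_summable_integral_norm hint hsum]
  have hterm : ∀ k : ℕ, (∫ x in Set.Ioo (-(c*t)) (c*t), f k x)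
      = (θ*t)^(2*k+2) / ((2*k+2).factorial : ℝ) / Real.cosh (θ*t) := by
    intro k
    rw [hf]
    simp only
    rw [MeasureTheory.integral_const_mul, hIoo k, hb]
    exact my_term θ c t hc k
  rw [tsum_congr hterm, my_sum (θ*t)]
end
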